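/- The complete list of quadruples (w_0,w_1,w_2,w_3) of positive integers with w_0 ≤ w_1 ≤ w_2 ≤ w_3, gcd equal to 1, and each w_i dividing w_0+w_1+w_2+w_3 is: (1,1,1,1), (1,1,1,3), (1,1,2,2), (1,3,4,4), (1,2,2,5), (1,1,4,6), (1,2,3,6), (1,1,2,4), (2,3,3,4), (1,2,6,9), (1,4,5,10), (1,3,8,12), (2,3,10,15), (1,6,14,21). -/
import Mathlib

private lemma cUB' (s w c A B : ℕ) (hw : 0 < w) (h : s = w * c) (h2 : A * s ≤ B * w) :
    A * c ≤ B := by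
  have h3 : w * (A * c) ≤ w * B := by
    calc w * (A * c) = A * (w * c) := by ring
    _ = A * s := by rw [h]
    _ ≤ B * w := h2
    _ = w * B := by ring
  exact Nat.le_of_mul_le_mul_left h3 hw

private lemma cLB' (s w c A B : ℕ) (hw : 0 < w) (h : s = w * c) (h2 : B * w < A * s) :
    B < A * c := by
  have h3 : w * B < w * (A * c) := by
    calc w * B = B * w := by ring
    _ < A * s := h2
    _ = A * (w * c) := by rw [h]
    _ = w * (A * c) := by ring
  exact Nat.lt_of_mul_lt_mul_left h3

private lemma gcd_pull' (a b c d t : ℕ)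
    (h : Nat.gcd (a * t) (Nat.gcd (b * t) (Nat.gcd (c * t) (d * t))) = 1)
    (hg1 : Nat.gcd a (Nat.gcd b (Nat.gcd c d)) = 1) : t = 1 := by
  simp only [Nat.gcd_mul_right] at h
  rw [hg1, one_mul] at h
  exact h

theorem gorenstein_wps_dim_three_classification (w0 w1 w2 w3 : ℕ) :
    (0 < w0 ∧ w0 ≤ w1 ∧ w1 ≤ w2 ∧ w2 ≤ w3 ∧
      Nat.gcd w0 (Nat.gcd w1 (Nat.gcd w2 w3)) = 1 ∧
      w0 ∣ w0 + w1 + w2 + w3 ∧ w1 ∣ w0 + w1 + w2 + w3 ∧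
      w2 ∣ w0 + w1 + w2 + w3 ∧ w3 ∣ w0 + w1 + w2 + w3) ↔
    ((w0, w1, w2, w3) = (1, 1, 1, 1) ∨ (w0, w1, w2, w3) = (1, 1, 1, 3) ∨
     (w0, w1, w2, w3) = (1, 1, 2, 2) ∨ (w0, w1, w2, w3) = (1, 3, 4, 4) ∨
     (w0, w1, w2, w3) = (1, 2, 2, 5) ∨ (w0, w1, w2, w3) = (1, 1, 4, 6) ∨
     (w0, w1, w2, w3) = (1, 2, 3, 6) ∨ (w0, w1, w2, w3) = (1, 1, 2, 4) ∨
     (w0, w1, w2, w3) = (2, 3, 3, 4) ∨ (w0, w1, w2, w3) = (1, 2, 6, 9) ∨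
     (w0, w1, w2, w3) = (1, 4, 5, 10) ∨ (w0, w1, w2, w3) = (1, 3, 8, 12) ∨
     (w0, w1, w2, w3) = (2, 3, 10, 15) ∨ (w0, w1, w2, w3) = (1, 6, 14, 21)) := by
  constructor
  · rintro ⟨hw0, h01, h12, h23, hg, hd0, hd1, hd2, hd3⟩
    obtain ⟨c0, e0⟩ := hd0
    obtain ⟨c1, e1⟩ := hd1
    obtain ⟨c2, e2⟩ := hd2
    obtain ⟨c3, e3⟩ := hd3
    have hb3u : 1 * c3 ≤ 4 := cUB' _ _ _ _ _ (by omega) e3 (by omega)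
    have hb3l : 1 < 1 * c3 := cLB' _ _ _ _ _ (by omega) e3 (by omega)
    have hc3 : c3 = 2 ∨ c3 = 3 ∨ c3 = 4 := by omega
    rcases hc3 with rfl | rfl | rfl
    -- c3 = 2
    · -- bound c2
      have hb2u : 1 * c2 ≤ 6 := cUB' _ _ _ _ _ (by omega) e2 (by omega)
      have hb2l : 1 < 1 * c2 := cLB' _ _ _ _ _ (by omega) e2 (by omega)
      have hc2 : c2 = 2 ∨ c2 = 3 ∨ c2 = 4 ∨ c2 = 5 ∨ c2 = 6 := by omega
      rcases hc2 with rfl | rfl | rfl | rfl | rfl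
      -- c2 = 2
      · omega
      -- c2 = 3
      · -- bound c1
        have hb1u : 1 * c1 ≤ 12 := cUB' _ _ _ _ _ (by omega) e1 (by omega)
        have hb1l : 2 < 1 * c1 := cLB' _ _ _ _ _ (by omega) e1 (by omega)
        have hc1 : c1 = 3 ∨ c1 = 4 ∨ c1 = 5 ∨ c1 = 6 ∨ c1 = 7 ∨ c1 = 8 ∨ c1 = 9 ∨ c1 = 10 ∨ c1 = 11 ∨ c1 = 12 := by omega
        rcases hc1 with rfl | rfl | rfl | rfl | rfl | rfl | rfl | rfl | rfl | rfl
        -- c1 = 3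
        · -- leaf
          omega
        -- c1 = 4
        · -- leaf
          omega
        -- c1 = 5
        · -- leaf
          omega
        -- c1 = 6
        · -- leaf
          omega
        -- c1 = 7
        · -- leaf
          obtain ⟨t, rfl, rfl, rfl, rfl⟩ : ∃ t, w0 = 1 * t ∧ w1 = 6 * t ∧ w2 = 14 * t ∧ w3 = 21 * t := ⟨w3 / 21, by omega⟩
          have ht : t = 1 := gcd_pull' 1 6 14 21 t hg (by decide)
          subst ht
          norm_num
        -- c1 = 8
        · -- leaf
          obtain ⟨t, rfl, rfl, rfl, rfl⟩ : ∃ t, w0 = 1 * t ∧ w1 = 3 * t ∧ w2 = 8 * t ∧ w3 = 12 * t := ⟨w3 / 12, by omega⟩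
          have ht : t = 1 := gcd_pull' 1 3 8 12 t hg (by decide)
          subst ht
          norm_num
        -- c1 = 9
        · -- leaf
          obtain ⟨t, rfl, rfl, rfl, rfl⟩ : ∃ t, w0 = 1 * t ∧ w1 = 2 * t ∧ w2 = 6 * t ∧ w3 = 9 * t := ⟨w3 / 9, by omega⟩
          have ht : t = 1 := gcd_pull' 1 2 6 9 t hg (by decide)
          subst ht
          norm_num
        -- c1 = 10
        · -- leaf
          obtain ⟨t, rfl, rfl, rfl, rfl⟩ : ∃ t, w0 = 2 * t ∧ w1 = 3 * t ∧ w2 = 10 * t ∧ w3 = 15 * t := ⟨w3 / 15, by omega⟩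
          have ht : t = 1 := gcd_pull' 2 3 10 15 t hg (by decide)
          subst ht
          norm_num
        -- c1 = 11
        · -- leaf
          have hu0 : 5 * c0 ≤ 66 := cUB' _ _ _ _ _ (by omega) e0 (by omega)
          have hl0 : 65 < 5 * c0 := cLB' _ _ _ _ _ (by omega) e0 (by omega)
          omega
        -- c1 = 12
        · -- leaf
          obtain ⟨t, rfl, rfl, rfl, rfl⟩ : ∃ t, w0 = 1 * t ∧ w1 = 1 * t ∧ w2 = 4 * t ∧ w3 = 6 * t := ⟨w3 / 6, by omega⟩
          have ht : t = 1 := gcd_pull' 1 1 4 6 t hg (by decide)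
          subst ht
          norm_num
      -- c2 = 4
      · -- bound c1
        have hb1u : 2 * c1 ≤ 16 := cUB' _ _ _ _ _ (by omega) e1 (by omega)
        have hb1l : 3 < 1 * c1 := cLB' _ _ _ _ _ (by omega) e1 (by omega)
        have hc1 : c1 = 4 ∨ c1 = 5 ∨ c1 = 6 ∨ c1 = 7 ∨ c1 = 8 := by omega
        rcases hc1 with rfl | rfl | rfl | rfl | rfl
        -- c1 = 4
        · -- leaf
          omega
        -- c1 = 5
        · -- leaf
          obtain ⟨t, rfl, rfl, rfl, rfl⟩ : ∃ t, w0 = 1 * t ∧ w1 = 4 * t ∧ w2 = 5 * t ∧ w3 = 10 * t := ⟨w3 / 10, by omega⟩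
          have ht : t = 1 := gcd_pull' 1 4 5 10 t hg (by decide)
          subst ht
          norm_num
        -- c1 = 6
        · -- leaf
          obtain ⟨t, rfl, rfl, rfl, rfl⟩ : ∃ t, w0 = 1 * t ∧ w1 = 2 * t ∧ w2 = 3 * t ∧ w3 = 6 * t := ⟨w3 / 6, by omega⟩
          have ht : t = 1 := gcd_pull' 1 2 3 6 t hg (by decide)
          subst ht
          norm_num
        -- c1 = 7
        · -- leaf
          have hu0 : 3 * c0 ≤ 28 := cUB' _ _ _ _ _ (by omega) e0 (by omega)
          have hl0 : 27 < 3 * c0 := cLB' _ _ _ _ _ (by omega) e0 (by omega)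
          omega
        -- c1 = 8
        · -- leaf
          obtain ⟨t, rfl, rfl, rfl, rfl⟩ : ∃ t, w0 = 1 * t ∧ w1 = 1 * t ∧ w2 = 2 * t ∧ w3 = 4 * t := ⟨w3 / 4, by omega⟩
          have ht : t = 1 := gcd_pull' 1 1 2 4 t hg (by decide)
          subst ht
          norm_num
      -- c2 = 5
      · -- bound c1
        have hb1u : 3 * c1 ≤ 20 := cUB' _ _ _ _ _ (by omega) e1 (by omega)
        have hb1l : 4 < 1 * c1 := cLB' _ _ _ _ _ (by omega) e1 (by omega)
        have hc1 : c1 = 5 ∨ c1 = 6 := by omega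
        rcases hc1 with rfl | rfl
        -- c1 = 5
        · -- leaf
          obtain ⟨t, rfl, rfl, rfl, rfl⟩ : ∃ t, w0 = 1 * t ∧ w1 = 2 * t ∧ w2 = 2 * t ∧ w3 = 5 * t := ⟨w3 / 5, by omega⟩
          have ht : t = 1 := gcd_pull' 1 2 2 5 t hg (by decide)
          subst ht
          norm_num
        -- c1 = 6
        · -- leaf
          have hu0 : 2 * c0 ≤ 15 := cUB' _ _ _ _ _ (by omega) e0 (by omega)
          have hl0 : 14 < 2 * c0 := cLB' _ _ _ _ _ (by omega) e0 (by omega)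
          omega
      -- c2 = 6
      · -- bound c1
        have hb1u : 4 * c1 ≤ 24 := cUB' _ _ _ _ _ (by omega) e1 (by omega)
        have hb1l : 5 < 1 * c1 := cLB' _ _ _ _ _ (by omega) e1 (by omega)
        have hc1 : c1 = 6 := by omega
        rcases hc1 with rfl
        -- c1 = 6
        · -- leaf
          obtain ⟨t, rfl, rfl, rfl, rfl⟩ : ∃ t, w0 = 1 * t ∧ w1 = 1 * t ∧ w2 = 1 * t ∧ w3 = 3 * t := ⟨w3 / 3, by omega⟩
          have ht : t = 1 := gcd_pull' 1 1 1 3 t hg (by decide)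
          subst ht
          norm_num
    -- c3 = 3
    · -- bound c2
      have hb2u : 2 * c2 ≤ 9 := cUB' _ _ _ _ _ (by omega) e2 (by omega)
      have hb2l : 2 < 1 * c2 := cLB' _ _ _ _ _ (by omega) e2 (by omega)
      have hc2 : c2 = 3 ∨ c2 = 4 := by omega
      rcases hc2 with rfl | rfl
      -- c2 = 3
      · -- bound c1
        have hb1u : 3 * c1 ≤ 18 := cUB' _ _ _ _ _ (by omega) e1 (by omega)
        have hb1l : 2 < 1 * c1 := cLB' _ _ _ _ _ (by omega) e1 (by omega)
        have hc1 : c1 = 3 ∨ c1 = 4 ∨ c1 = 5 ∨ c1 = 6 := by omega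
        rcases hc1 with rfl | rfl | rfl | rfl
        -- c1 = 3
        · -- leaf
          omega
        -- c1 = 4
        · -- leaf
          obtain ⟨t, rfl, rfl, rfl, rfl⟩ : ∃ t, w0 = 1 * t ∧ w1 = 3 * t ∧ w2 = 4 * t ∧ w3 = 4 * t := ⟨w3 / 4, by omega⟩
          have ht : t = 1 := gcd_pull' 1 3 4 4 t hg (by decide)
          subst ht
          norm_num
        -- c1 = 5
        · -- leaf
          have hu0 : 2 * c0 ≤ 15 := cUB' _ _ _ _ _ (by omega) e0 (by omega)
          have hl0 : 14 < 2 * c0 := cLB' _ _ _ _ _ (by omega) e0 (by omega)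
          omega
        -- c1 = 6
        · -- leaf
          obtain ⟨t, rfl, rfl, rfl, rfl⟩ : ∃ t, w0 = 1 * t ∧ w1 = 1 * t ∧ w2 = 2 * t ∧ w3 = 2 * t := ⟨w3 / 2, by omega⟩
          have ht : t = 1 := gcd_pull' 1 1 2 2 t hg (by decide)
          subst ht
          norm_num
      -- c2 = 4
      · -- bound c1
        have hb1u : 5 * c1 ≤ 24 := cUB' _ _ _ _ _ (by omega) e1 (by omega)
        have hb1l : 3 < 1 * c1 := cLB' _ _ _ _ _ (by omega) e1 (by omega)
        have hc1 : c1 = 4 := by omega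
        rcases hc1 with rfl
        -- c1 = 4
        · -- leaf
          obtain ⟨t, rfl, rfl, rfl, rfl⟩ : ∃ t, w0 = 2 * t ∧ w1 = 3 * t ∧ w2 = 3 * t ∧ w3 = 4 * t := ⟨w3 / 4, by omega⟩
          have ht : t = 1 := gcd_pull' 2 3 3 4 t hg (by decide)
          subst ht
          norm_num
    -- c3 = 4
    · -- bound c2
      have hb2u : 3 * c2 ≤ 12 := cUB' _ _ _ _ _ (by omega) e2 (by omega)
      have hb2l : 3 < 1 * c2 := cLB' _ _ _ _ _ (by omega) e2 (by omega)
      have hc2 : c2 = 4 := by omega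
      rcases hc2 with rfl
      -- c2 = 4
      · -- bound c1
        have hb1u : 8 * c1 ≤ 32 := cUB' _ _ _ _ _ (by omega) e1 (by omega)
        have hb1l : 3 < 1 * c1 := cLB' _ _ _ _ _ (by omega) e1 (by omega)
        have hc1 : c1 = 4 := by omega
        rcases hc1 with rfl
        -- c1 = 4
        · -- leaf
          obtain ⟨t, rfl, rfl, rfl, rfl⟩ : ∃ t, w0 = 1 * t ∧ w1 = 1 * t ∧ w2 = 1 * t ∧ w3 = 1 * t := ⟨w3 / 1, by omega⟩
          have ht : t = 1 := gcd_pull' 1 1 1 1 t hg (by decide)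
          subst ht
          norm_num
  · intro h
    rcases h with h | h | h | h | h | h | h | h | h | h | h | h | h | h <;>
      (simp only [Prod.mk.injEq] at h; obtain ⟨rfl, rfl, rfl, rfl⟩ := h;
       exact ⟨by norm_num, by norm_num, by norm_num, by norm_num, by decide, by decide, by decide, by decide, by decide⟩)
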